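/- The Choi divergence is monotone under superchannels of the form Θ(N) = Σ_x p(x) Ω^x_{BE→D} ∘ N_{A→B} ∘ Λ^x_{C→AE} with each Λ^x unital: D^Φ(N‖M) ≥ D^Φ(Θ(N)‖Θ(M)), for any generalized divergence D (any function of pairs of states monotone under CPTP maps and satisfying D(ρ⊗ω‖σ⊗ω)=D(ρ‖σ)). -/
import Mathlib


open Matrix BigOperators
open scoped Kronecker ComplexOrder

namespace QCh

variable {n m : Type*} [Fintype n] [DecidableEq n] [Fintype m] [DecidableEq m]

/-- Density matrix: positive semidefinite with unit trace. -/
def IsDensity (ρ : Matrix n n ℂ) : Prop := ρ.PosSemidef ∧ ρ.trace = 1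

/-- Pure state: density matrix that is a projection. -/
def IsPure (ρ : Matrix n n ℂ) : Prop := IsDensity ρ ∧ ρ * ρ = ρ

/-- Apply a real function to a Hermitian matrix via its spectral decomposition. -/
noncomputable def matFun (f : ℝ → ℝ) (A : Matrix n n ℂ) : Matrix n n ℂ :=
  if h : A.IsHermitian then
    (h.eigenvectorUnitary : Matrix n n ℂ) * Matrix.diagonal (fun i => (f (h.eigenvalues i) : ℂ)) *
      (star h.eigenvectorUnitary : Matrix n n ℂ)
  else 0

/-- von Neumann entropy in bits. -/
noncomputable def vnEntropy (ρ : Matrix n n ℂ) : ℝ :=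
  if h : ρ.IsHermitian then -∑ i, h.eigenvalues i * Real.logb 2 (h.eigenvalues i) else 0

/-- Base-2 matrix logarithm (on the support, via spectral calculus). -/
noncomputable def matLog2 (A : Matrix n n ℂ) : Matrix n n ℂ := matFun (Real.logb 2) A

/-- Quantum relative entropy in bits. -/
noncomputable def relEnt (ρ σ : Matrix n n ℂ) : ℝ :=
  ((ρ * (matLog2 ρ - matLog2 σ)).trace).re

/-- Partial trace over the second tensor factor. -/
noncomputable def ptR {p : Type*} [Fintype p] (M : Matrix (n × p) (n × p) ℂ) : Matrix n n ℂ :=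
  Matrix.of fun i j => ∑ k, M (i, k) (j, k)

/-- Partial trace over the first tensor factor. -/
noncomputable def ptL {p : Type*} [Fintype p] (M : Matrix (p × n) (p × n) ℂ) : Matrix n n ℂ :=
  Matrix.of fun i j => ∑ k, M (k, i) (k, j)

/-- Conditional entropy H(B|R) of a state on R ⊗ B. -/
noncomputable def condEntB {R B : Type*} [Fintype R] [DecidableEq R] [Fintype B] [DecidableEq B]
    (ω : Matrix (R × B) (R × B) ℂ) : ℝ := vnEntropy ω - vnEntropy (ptR ω)

/-- Extension id_R ⊗ N of a map N on system A, acting on a state of R ⊗ A. -/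
noncomputable def ext {R A B : Type*} [Fintype R] [DecidableEq R] [Fintype A] [DecidableEq A]
    [Fintype B] [DecidableEq B] (N : Matrix A A ℂ → Matrix B B ℂ)
    (ψ : Matrix (R × A) (R × A) ℂ) : Matrix (R × B) (R × B) ℂ :=
  Matrix.of fun p q => N (Matrix.of fun a a' => ψ (p.1, a) (q.1, a')) p.2 q.2

/-- The channel with Kraus operators K. -/
noncomputable def krausMap {A B ι : Type*} [Fintype A] [Fintype B] [Fintype ι]
    (K : ι → Matrix B A ℂ) (X : Matrix A A ℂ) : Matrix B B ℂ :=
  ∑ i, K i * X * (K i)ᴴ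

/-- Entropy of a channel: infimum of H(B|R) of the output over pure bipartite inputs,
with the reference system isomorphic to the channel input. -/
noncomputable def chEnt {A B : Type*} [Fintype A] [DecidableEq A] [Fintype B] [DecidableEq B]
    (N : Matrix A A ℂ → Matrix B B ℂ) : ℝ :=
  sInf {x | ∃ ψ : Matrix (A × A) (A × A) ℂ, IsPure ψ ∧ x = condEntB (ext N ψ)}

/-- The normalized maximally entangled state Φ on A ⊗ A. -/
noncomputable def maxEnt (A : Type*) [Fintype A] [DecidableEq A] :
    Matrix (A × A) (A × A) ℂ :=
  ((Fintype.card A : ℂ))⁻¹ •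
    Matrix.of fun p q => if p.1 = p.2 ∧ q.1 = q.2 then 1 else 0


open ComplexConjugate

lemma maxEnt_apply' (A : Type) [Fintype A] [DecidableEq A] (p q : A × A) :
    maxEnt A p q = (Fintype.card A : ℂ)⁻¹ *
      ((if p.1 = p.2 then 1 else 0) * (if q.1 = q.2 then 1 else 0)) := by
  simp [maxEnt, ite_and, Matrix.smul_apply, smul_eq_mul]
  split <;> simp

lemma maxEnt_density (A : Type) [Fintype A] [DecidableEq A] [Nonempty A] :
    IsDensity (maxEnt A) := by
  have hs : ((Real.sqrt (Fintype.card A) : ℂ))⁻¹ * ((Real.sqrt (Fintype.card A) : ℂ))⁻¹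
      = (Fintype.card A : ℂ)⁻¹ := by
    rw [← mul_inv, ← Complex.ofReal_mul, Real.mul_self_sqrt (by positivity)]
    push_cast
    ring
  constructor
  · have h : maxEnt A = (Matrix.of fun (_ : Unit) (p : A × A) =>
        ((Real.sqrt (Fintype.card A))⁻¹ : ℂ) * (if p.1 = p.2 then 1 else 0))ᴴ *
        (Matrix.of fun (_ : Unit) (p : A × A) =>
        ((Real.sqrt (Fintype.card A))⁻¹ : ℂ) * (if p.1 = p.2 then 1 else 0)) := by
      ext p q
      rw [maxEnt_apply']
      simp only [Matrix.mul_apply, Matrix.conjTranspose_apply, Matrix.of_apply,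
        Finset.univ_unique, Finset.sum_singleton, star_mul', Complex.star_def, map_inv₀,
        Complex.conj_ofReal, apply_ite conj, _root_.map_one, _root_.map_zero]
      rw [← hs]
      ring
    rw [h]
    exact Matrix.posSemidef_conjTranspose_mul_self _
  · have h : ∀ p : A × A, maxEnt A p p
        = (Fintype.card A : ℂ)⁻¹ * (if p.1 = p.2 then 1 else 0) := by
      intro p; rw [maxEnt_apply']; split <;> simp
    simp only [Matrix.trace, Matrix.diag, h, ← Finset.mul_sum]
    rw [Fintype.sum_prod_type]
    simp [Finset.sum_ite_eq]

lemma choi_apply {A B ι : Type} [Fintype A] [DecidableEq A] [Fintype B] [DecidableEq B]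
    [Fintype ι] (K : ι → Matrix B A ℂ) (r s : A × B) :
    ext (krausMap K) (maxEnt A) r s
      = (Fintype.card A : ℂ)⁻¹ * ∑ i, K i r.2 r.1 * conj (K i s.2 s.1) := by
  obtain ⟨a, b⟩ := r
  obtain ⟨a', b'⟩ := s
  simp only [ext, krausMap, Matrix.of_apply, Matrix.sum_apply, Matrix.mul_apply,
    Matrix.conjTranspose_apply]
  simp only [maxEnt_apply']
  simp only [mul_ite, mul_one, mul_zero, ite_mul, zero_mul,
    Finset.sum_ite_eq, Finset.mem_univ, if_true, Finset.mul_sum]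
  rw [Finset.sum_comm]
  simp [Finset.sum_ite_eq, mul_comm, mul_assoc, mul_left_comm]

lemma sum_ite_const {γ : Type} (P : Prop) [Decidable P] (s : Finset γ) (g : γ → ℂ) :
    (∑ x ∈ s, if P then g x else 0) = if P then ∑ x ∈ s, g x else 0 := by
  split <;> simp

lemma reorder {κ μ A B E ι : Type} [Fintype κ] [Fintype μ] [Fintype A] [Fintype B]
    [Fintype E] [Fintype ι] (g : κ → μ → A → B → E → A → B → E → ι → ℂ) :
    (∑ k : κ, ∑ m : μ, ∑ p : A, ∑ q : B, ∑ u : E, ∑ p' : A, ∑ q' : B, ∑ u' : E, ∑ i : ι,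
        g k m p q u p' q' u' i)
      = ∑ m : μ, ∑ i : ι, ∑ k : κ, ∑ p : A, ∑ u : E, ∑ q : B, ∑ p' : A, ∑ u' : E, ∑ q' : B,
        g k m p q u p' q' u' i := by
  have h1 : (∑ z : κ × μ × A × B × E × A × B × E × ι,
      g z.1 z.2.1 z.2.2.1 z.2.2.2.1 z.2.2.2.2.1 z.2.2.2.2.2.1 z.2.2.2.2.2.2.1
        z.2.2.2.2.2.2.2.1 z.2.2.2.2.2.2.2.2)
      = ∑ k : κ, ∑ m : μ, ∑ p : A, ∑ q : B, ∑ u : E, ∑ p' : A, ∑ q' : B, ∑ u' : E, ∑ i : ι,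
        g k m p q u p' q' u' i := by
    simp only [Fintype.sum_prod_type]
  have h2 : (∑ w : μ × ι × κ × A × E × B × A × E × B,
      g w.2.2.1 w.1 w.2.2.2.1 w.2.2.2.2.2.1 w.2.2.2.2.1 w.2.2.2.2.2.2.1
        w.2.2.2.2.2.2.2.2 w.2.2.2.2.2.2.2.1 w.2.1)
      = ∑ m : μ, ∑ i : ι, ∑ k : κ, ∑ p : A, ∑ u : E, ∑ q : B, ∑ p' : A, ∑ u' : E, ∑ q' : B,
        g k m p q u p' q' u' i := by
    simp only [Fintype.sum_prod_type]
  rw [← h1, ← h2]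
  exact Fintype.sum_equiv
    ⟨fun z => (z.2.1, z.2.2.2.2.2.2.2.2, z.1, z.2.2.1, z.2.2.2.2.1, z.2.2.2.1,
        z.2.2.2.2.2.1, z.2.2.2.2.2.2.2.1, z.2.2.2.2.2.2.1),
      fun w => (w.2.2.1, w.1, w.2.2.2.1, w.2.2.2.2.2.1, w.2.2.2.2.1, w.2.2.2.2.2.2.1,
        w.2.2.2.2.2.2.2.2, w.2.2.2.2.2.2.2.1, w.2.1),
      fun z => rfl, fun w => rfl⟩ _ _ (fun z => rfl)

set_option maxHeartbeats 4000000 in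
lemma sandwich_eq {A B E Dy ι κ μ : Type}
    [Fintype A] [DecidableEq A] [Fintype B] [DecidableEq B]
    [Fintype E] [DecidableEq E] [Fintype Dy] [DecidableEq Dy]
    [Fintype ι] [Fintype κ] [Fintype μ]
    (Λx : κ → Matrix (A × E) (A × E) ℂ) (Ωx : μ → Matrix Dy (B × E) ℂ)
    (K : ι → Matrix B A ℂ) :
    ∑ k, ∑ m, (Matrix.of fun (r : (A × E) × Dy) (c : (A × B) × (E × E)) =>
          Λx k (c.1.1, c.2.1) r.1 * Ωx m r.2 (c.1.2, c.2.2))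
        * (ext (krausMap K) (maxEnt A) ⊗ₖ maxEnt E)
        * (Matrix.of fun (r : (A × E) × Dy) (c : (A × B) × (E × E)) =>
          Λx k (c.1.1, c.2.1) r.1 * Ωx m r.2 (c.1.2, c.2.2))ᴴ
      = ext (krausMap (fun t : μ × ι × κ =>
          Ωx t.1 * (K t.2.1 ⊗ₖ (1 : Matrix E E ℂ)) * Λx t.2.2)) (maxEnt (A × E)) := by
  ext r r'
  obtain ⟨⟨a, e⟩, d⟩ := r
  obtain ⟨⟨a', e'⟩, d'⟩ := r'
  rw [Matrix.sum_apply]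
  simp only [Matrix.sum_apply]
  conv_rhs => rw [choi_apply]
  simp only [Matrix.mul_apply, Matrix.conjTranspose_apply, Matrix.of_apply,
    Matrix.kroneckerMap_apply, Matrix.one_apply, choi_apply, maxEnt_apply']
  simp only [star_mul', Complex.star_def, _root_.map_sum, _root_.map_mul,
    Fintype.card_prod, Nat.cast_mul, mul_inv]
  simp only [Fintype.sum_prod_type, mul_ite, ite_mul, mul_zero, zero_mul,
    mul_one, one_mul, Finset.sum_ite_eq, Finset.sum_ite_eq', Finset.mem_univ, if_true]
  simp (config := { maxSteps := 1000000 }) only [Finset.mul_sum, Finset.sum_mul]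
  simp only [apply_ite (starRingEnd ℂ), _root_.map_one, _root_.map_zero, mul_ite, ite_mul,
    mul_zero, zero_mul, mul_one, one_mul, sum_ite_const, Finset.sum_ite_eq,
    Finset.sum_ite_eq', Finset.mem_univ, if_true]
  simp (config := { maxSteps := 10000000 }) only [Finset.mul_sum, Finset.sum_mul]
  rw [reorder (fun k m p q u p' q' u' i =>
    Λx k (p', u') (a, e) * Ωx m d (q', u') *
      ((↑(Fintype.card A))⁻¹ * (K i q' p' * (starRingEnd ℂ) (K i q p)) *
        (↑(Fintype.card E))⁻¹) *
      ((starRingEnd ℂ) (Λx k (p, u) (a', e')) * (starRingEnd ℂ) (Ωx m d' (q, u))))]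
  refine Finset.sum_congr rfl fun _ _ => ?_
  refine Finset.sum_congr rfl fun _ _ => ?_
  refine Finset.sum_congr rfl fun _ _ => ?_
  refine Finset.sum_congr rfl fun _ _ => ?_
  refine Finset.sum_congr rfl fun _ _ => ?_
  refine Finset.sum_congr rfl fun _ _ => ?_
  refine Finset.sum_congr rfl fun _ _ => ?_
  refine Finset.sum_congr rfl fun _ _ => ?_
  refine Finset.sum_congr rfl fun _ _ => ?_
  ring

lemma reorder5 {κ μ A E Dy : Type} [Fintype κ] [Fintype μ] [Fintype A] [Fintype E]
    [Fintype Dy] (g : κ → μ → A → E → Dy → ℂ) :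
    (∑ k : κ, ∑ m : μ, ∑ x : A, ∑ y : E, ∑ dd : Dy, g k m x y dd)
      = ∑ m : μ, ∑ dd : Dy, ∑ k : κ, ∑ x : A, ∑ y : E, g k m x y dd := by
  have h1 : (∑ z : κ × μ × A × E × Dy, g z.1 z.2.1 z.2.2.1 z.2.2.2.1 z.2.2.2.2)
      = ∑ k : κ, ∑ m : μ, ∑ x : A, ∑ y : E, ∑ dd : Dy, g k m x y dd := by
    simp only [Fintype.sum_prod_type]
  have h2 : (∑ w : μ × Dy × κ × A × E, g w.2.2.1 w.1 w.2.2.2.1 w.2.2.2.2 w.2.1)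
      = ∑ m : μ, ∑ dd : Dy, ∑ k : κ, ∑ x : A, ∑ y : E, g k m x y dd := by
    simp only [Fintype.sum_prod_type]
  rw [← h1, ← h2]
  exact Fintype.sum_equiv
    ⟨fun z => (z.2.1, z.2.2.2.2, z.1, z.2.2.1, z.2.2.2.1),
      fun w => (w.2.2.1, w.1, w.2.2.2.1, w.2.2.2.2, w.2.1),
      fun z => rfl, fun w => rfl⟩ _ _ (fun z => rfl)

lemma F0_tp {A B E Dy κ μ : Type}
    [Fintype A] [DecidableEq A] [Fintype B] [DecidableEq B]
    [Fintype E] [DecidableEq E] [Fintype Dy] [DecidableEq Dy]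
    [Fintype κ] [Fintype μ]
    (Λx : κ → Matrix (A × E) (A × E) ℂ) (Ωx : μ → Matrix Dy (B × E) ℂ)
    (hU : ∑ k, Λx k * (Λx k)ᴴ = 1) (hO : ∑ m, (Ωx m)ᴴ * Ωx m = 1) :
    ∑ k, ∑ m, (Matrix.of fun (r : (A × E) × Dy) (c : (A × B) × (E × E)) =>
        Λx k (c.1.1, c.2.1) r.1 * Ωx m r.2 (c.1.2, c.2.2))ᴴ
      * (Matrix.of fun (r : (A × E) × Dy) (c : (A × B) × (E × E)) =>
        Λx k (c.1.1, c.2.1) r.1 * Ωx m r.2 (c.1.2, c.2.2)) = 1 := by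
  have hU' : ∀ s t : A × E, (∑ k, ∑ ae : A × E, Λx k s ae * (starRingEnd ℂ) (Λx k t ae))
      = if s = t then 1 else 0 := by
    intro s t
    have h : (∑ k, Λx k * (Λx k)ᴴ) s t = (1 : Matrix (A × E) (A × E) ℂ) s t := by rw [hU]
    simpa [Matrix.sum_apply, Matrix.mul_apply, Matrix.conjTranspose_apply,
      Matrix.one_apply] using h
  have hO' : ∀ s t : B × E, (∑ m, ∑ d : Dy, (starRingEnd ℂ) (Ωx m d s) * Ωx m d t)
      = if s = t then 1 else 0 := by
    intro s t
    have h : (∑ m, (Ωx m)ᴴ * Ωx m) s t = (1 : Matrix (B × E) (B × E) ℂ) s t := by rw [hO]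
    simpa [Matrix.sum_apply, Matrix.mul_apply, Matrix.conjTranspose_apply,
      Matrix.one_apply] using h
  ext c c'
  obtain ⟨⟨a1, b1⟩, e1, e2⟩ := c
  obtain ⟨⟨a1', b1'⟩, e1', e2'⟩ := c'
  have tr : (∑ k, ∑ m, (Matrix.of fun (r : (A × E) × Dy) (c : (A × B) × (E × E)) =>
        Λx k (c.1.1, c.2.1) r.1 * Ωx m r.2 (c.1.2, c.2.2))ᴴ
      * (Matrix.of fun (r : (A × E) × Dy) (c : (A × B) × (E × E)) =>
        Λx k (c.1.1, c.2.1) r.1 * Ωx m r.2 (c.1.2, c.2.2))) ((a1, b1), (e1, e2)) ((a1', b1'), (e1', e2'))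
      = (∑ k, ∑ ae : A × E, Λx k (a1', e1') ae * (starRingEnd ℂ) (Λx k (a1, e1) ae))
        * (∑ m, ∑ d : Dy, (starRingEnd ℂ) (Ωx m d (b1, e2)) * Ωx m d (b1', e2')) := by
    simp only [Matrix.sum_apply]
    simp only [Matrix.mul_apply, Matrix.conjTranspose_apply, Matrix.of_apply]
    simp only [Fintype.sum_prod_type, star_mul', Complex.star_def]
    simp only [Finset.sum_mul, Finset.mul_sum]
    rw [reorder5 (fun k m x y dd => (starRingEnd ℂ) (Λx k (a1, e1) (x, y)) *
      (starRingEnd ℂ) (Ωx m dd (b1, e2)) * (Λx k (a1', e1') (x, y) * Ωx m dd (b1', e2')))]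
    refine Finset.sum_congr rfl fun _ _ => ?_
    refine Finset.sum_congr rfl fun _ _ => ?_
    refine Finset.sum_congr rfl fun _ _ => ?_
    refine Finset.sum_congr rfl fun _ _ => ?_
    refine Finset.sum_congr rfl fun _ _ => ?_
    ring
  rw [tr, hU', hO']
  by_cases h1 : ((a1, b1), (e1, e2)) = (((a1', b1'), (e1', e2')) : (A × B) × (E × E))
  · simp at h1
    simp [Matrix.one_apply, h1.1.1, h1.1.2, h1.2.1, h1.2.2]
  · have : ¬ ((a1', e1') = (a1, e1) ∧ (b1, e2) = (b1', e2')) := by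
      intro hcon
      apply h1
      simp only [Prod.mk.injEq] at hcon ⊢
      exact ⟨⟨hcon.1.1.symm, hcon.2.1⟩, hcon.1.2.symm, hcon.2.2⟩
    rw [Matrix.one_apply_ne h1]
    by_cases hA : (a1', e1') = (a1, e1) <;> by_cases hB : (b1, e2) = (b1', e2') <;>
      simp_all

lemma state_eq {A B E Dy X ι κ μ : Type}
    [Fintype A] [DecidableEq A] [Fintype B] [DecidableEq B]
    [Fintype E] [DecidableEq E] [Fintype Dy] [DecidableEq Dy]
    [Fintype X] [Fintype ι] [Fintype κ] [Fintype μ]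
    (p : X → ℝ) (hp0 : ∀ x, 0 ≤ p x)
    (Λ : X → κ → Matrix (A × E) (A × E) ℂ) (Ω : X → μ → Matrix Dy (B × E) ℂ)
    (K : ι → Matrix B A ℂ) :
    (∑ t : X × κ × μ,
      (((Real.sqrt (p t.1) : ℝ) : ℂ) • Matrix.of (fun (r : (A × E) × Dy) (c : (A × B) × (E × E)) =>
          Λ t.1 t.2.1 (c.1.1, c.2.1) r.1 * Ω t.1 t.2.2 r.2 (c.1.2, c.2.2)))
        * (ext (krausMap K) (maxEnt A) ⊗ₖ maxEnt E)
        * (((Real.sqrt (p t.1) : ℝ) : ℂ) • Matrix.of (fun (r : (A × E) × Dy) (c : (A × B) × (E × E)) =>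
          Λ t.1 t.2.1 (c.1.1, c.2.1) r.1 * Ω t.1 t.2.2 r.2 (c.1.2, c.2.2)))ᴴ)
    = ∑ x, ((p x : ℝ) : ℂ) • ext (krausMap (fun t : μ × ι × κ =>
        Ω x t.1 * (K t.2.1 ⊗ₖ (1 : Matrix E E ℂ)) * Λ x t.2.2)) (maxEnt (A × E)) := by
  rw [Fintype.sum_prod_type]
  refine Finset.sum_congr rfl fun x _ => ?_
  have hsx : ((Real.sqrt (p x) : ℝ) : ℂ) * star ((Real.sqrt (p x) : ℝ) : ℂ) = ((p x : ℝ) : ℂ) := by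
    rw [Complex.star_def, Complex.conj_ofReal, ← Complex.ofReal_mul,
      Real.mul_self_sqrt (hp0 x)]
  have hsx' : star ((Real.sqrt (p x) : ℝ) : ℂ) * ((Real.sqrt (p x) : ℝ) : ℂ)
      = ((p x : ℝ) : ℂ) := by rw [mul_comm]; exact hsx
  rw [Fintype.sum_prod_type]
  simp only [Matrix.conjTranspose_smul, Matrix.smul_mul, Matrix.mul_smul, smul_smul,
    hsx, hsx']
  simp_rw [← Finset.smul_sum]
  rw [sandwich_eq (Λ x) (Ω x) K]

lemma F_tp_full {A B E Dy X κ μ : Type}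
    [Fintype A] [DecidableEq A] [Fintype B] [DecidableEq B]
    [Fintype E] [DecidableEq E] [Fintype Dy] [DecidableEq Dy]
    [Fintype X] [Fintype κ] [Fintype μ]
    (p : X → ℝ) (hp0 : ∀ x, 0 ≤ p x) (hp1 : ∑ x, p x = 1)
    (Λ : X → κ → Matrix (A × E) (A × E) ℂ)
    (hΛunital : ∀ x, ∑ k, Λ x k * (Λ x k)ᴴ = 1)
    (Ω : X → μ → Matrix Dy (B × E) ℂ)
    (hΩ : ∀ x, ∑ m, (Ω x m)ᴴ * Ω x m = 1) :
    (∑ t : X × κ × μ,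
      (((Real.sqrt (p t.1) : ℝ) : ℂ) • Matrix.of (fun (r : (A × E) × Dy) (c : (A × B) × (E × E)) =>
          Λ t.1 t.2.1 (c.1.1, c.2.1) r.1 * Ω t.1 t.2.2 r.2 (c.1.2, c.2.2)))ᴴ
      * (((Real.sqrt (p t.1) : ℝ) : ℂ) • Matrix.of (fun (r : (A × E) × Dy) (c : (A × B) × (E × E)) =>
          Λ t.1 t.2.1 (c.1.1, c.2.1) r.1 * Ω t.1 t.2.2 r.2 (c.1.2, c.2.2))))
    = 1 := by
  have hsx : ∀ x : X, star ((Real.sqrt (p x) : ℝ) : ℂ) * ((Real.sqrt (p x) : ℝ) : ℂ)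
      = ((p x : ℝ) : ℂ) := fun x => by
    rw [Complex.star_def, Complex.conj_ofReal, ← Complex.ofReal_mul,
      Real.mul_self_sqrt (hp0 x)]
  have hsx' : ∀ x : X, ((Real.sqrt (p x) : ℝ) : ℂ) * star ((Real.sqrt (p x) : ℝ) : ℂ)
      = ((p x : ℝ) : ℂ) := fun x => by
    rw [mul_comm]; exact hsx x
  simp only [Fintype.sum_prod_type, Matrix.conjTranspose_smul, Matrix.smul_mul,
    Matrix.mul_smul, smul_smul, hsx, hsx']
  simp_rw [← Finset.smul_sum]
  have hinner : ∀ x ∈ (Finset.univ : Finset X),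
      ((p x : ℝ) : ℂ) • (∑ k, ∑ m, (Matrix.of fun (r : (A × E) × Dy) (c : (A × B) × (E × E)) =>
          Λ x k (c.1.1, c.2.1) r.1 * Ω x m r.2 (c.1.2, c.2.2))ᴴ
        * (Matrix.of fun (r : (A × E) × Dy) (c : (A × B) × (E × E)) =>
          Λ x k (c.1.1, c.2.1) r.1 * Ω x m r.2 (c.1.2, c.2.2)))
      = ((p x : ℝ) : ℂ) • (1 : Matrix ((A × B) × (E × E)) ((A × B) × (E × E)) ℂ) := by
    intro x _
    rw [F0_tp (Λ x) (Ω x) (hΛunital x) (hΩ x)]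
  rw [Finset.sum_congr rfl hinner, ← Finset.sum_smul, ← Complex.ofReal_sum, hp1,
    Complex.ofReal_one, one_smul]

/-- For any generalized divergence Dg (monotone under CPTP maps and
invariant under tensoring with a fixed state), the Choi divergence is monotone under
superchannels Θ(N) = Σ_x p(x) Ω^x ∘ (N ⊗ id_E) ∘ Λ^x with each pre-processing Λ^x a
unital channel: Dg^Φ(Θ(N) ‖ Θ(M)) ≤ Dg^Φ(N ‖ M). -/
theorem choi_divergence_monotone
    {A B E Dy X ι ι' κ μ : Type}
    [Fintype A] [DecidableEq A] [Nonempty A] [Fintype B] [DecidableEq B]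
    [Fintype E] [DecidableEq E] [Nonempty E] [Fintype Dy] [DecidableEq Dy]
    [Fintype X] [Fintype ι] [Fintype ι'] [Fintype κ] [Fintype μ]
    (Dg : ∀ (n : Type) [Fintype n] [DecidableEq n], Matrix n n ℂ → Matrix n n ℂ → ℝ)
    (hDP : ∀ (n m : Type) [Fintype n] [DecidableEq n] [Fintype m] [DecidableEq m]
      (τ : Type) [Fintype τ] (F : τ → Matrix m n ℂ), (∑ t, (F t)ᴴ * F t) = 1 →
      ∀ ρ σ : Matrix n n ℂ,
        Dg m (∑ t, F t * ρ * (F t)ᴴ) (∑ t, F t * σ * (F t)ᴴ) ≤ Dg n ρ σ)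
    (hTensor : ∀ (n m : Type) [Fintype n] [DecidableEq n] [Fintype m] [DecidableEq m]
      (ρ σ : Matrix n n ℂ) (ω : Matrix m m ℂ), IsDensity ω →
        Dg (n × m) (ρ ⊗ₖ ω) (σ ⊗ₖ ω) = Dg n ρ σ)
    (p : X → ℝ) (hp0 : ∀ x, 0 ≤ p x) (hp1 : ∑ x, p x = 1)
    (K : ι → Matrix B A ℂ) (hK : ∑ i, (K i)ᴴ * K i = 1)
    (L : ι' → Matrix B A ℂ) (hL : ∑ i, (L i)ᴴ * L i = 1)
    (Λ : X → κ → Matrix (A × E) (A × E) ℂ)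
    (hΛtp : ∀ x, ∑ k, (Λ x k)ᴴ * Λ x k = 1)
    (hΛunital : ∀ x, ∑ k, Λ x k * (Λ x k)ᴴ = 1)
    (Ω : X → μ → Matrix Dy (B × E) ℂ)
    (hΩ : ∀ x, ∑ m, (Ω x m)ᴴ * Ω x m = 1) :
    Dg ((A × E) × Dy)
        (∑ x, ((p x : ℝ) : ℂ) •
          ext (krausMap (fun t : μ × ι × κ =>
            Ω x t.1 * (K t.2.1 ⊗ₖ (1 : Matrix E E ℂ)) * Λ x t.2.2)) (maxEnt (A × E)))
        (∑ x, ((p x : ℝ) : ℂ) •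
          ext (krausMap (fun t : μ × ι' × κ =>
            Ω x t.1 * (L t.2.1 ⊗ₖ (1 : Matrix E E ℂ)) * Λ x t.2.2)) (maxEnt (A × E))) ≤
      Dg (A × B) (ext (krausMap K) (maxEnt A)) (ext (krausMap L) (maxEnt A)) := by
  classical
  have h1 := hDP ((A × B) × (E × E)) ((A × E) × Dy) (X × κ × μ)
    (fun t : X × κ × μ =>
      ((Real.sqrt (p t.1) : ℝ) : ℂ) • Matrix.of (fun (r : (A × E) × Dy) (c : (A × B) × (E × E)) =>
        Λ t.1 t.2.1 (c.1.1, c.2.1) r.1 * Ω t.1 t.2.2 r.2 (c.1.2, c.2.2)))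
    (F_tp_full p hp0 hp1 Λ hΛunital Ω hΩ)
    (ext (krausMap K) (maxEnt A) ⊗ₖ maxEnt E)
    (ext (krausMap L) (maxEnt A) ⊗ₖ maxEnt E)
  rw [state_eq p hp0 Λ Ω K, state_eq p hp0 Λ Ω L] at h1
  exact le_of_le_of_eq h1
    (hTensor (A × B) (E × E) (ext (krausMap K) (maxEnt A)) (ext (krausMap L) (maxEnt A))
      (maxEnt E) (maxEnt_density E))

end QCh
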